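/- Let l ≥ 1, and in F_3((T⁻¹)) suppose α_n = [a_n, α_{n+1}] (i.e., α_n = a_n + 1/α_{n+1}) with a_n = λ_n T + μ_n, λ_n ∈ F_3 \ {0}, μ_n ∈ F_3, and α_n³ = ε₁(T²+1)α_{f(n)} + ε_{2,n}T + ν_{n-1} with ε₁, ε_{2,n} ∈ F_3 \ {0}, ν_{n-1} ∈ F_3, f(n) = 3n + l - 2. Set ν_n = μ_n - ν_{n-1}, δ_n = λ_n + ε_{2,n}, assume δ_n ≠ 0, and set ε*_n = 1 if ν_n = 0, ε*_n = -1 otherwise. Then a_{f(n)} = ε₁λ_n T, a_{f(n)+1} = -ε₁(δ_n T + ν_n), a_{f(n)+2} = -ε₁(ε*_n δ_n T + ν_n), and α_{n+1}³ = ε₁(T²+1)α_{f(n+1)} + (-ε*_n δ_n)T + ν_n. -/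

import Mathlib

namespace Lemma2Aux
open HahnSeries

abbrev K : Type := LaurentSeries (ZMod 3)

def small (f : K) : Prop := ∀ k : ℤ, k ≤ 0 → f.coeff k = 0

lemma small_of_order {f : K} (hf : f ≠ 0) (h : 0 < f.order) : small f :=
  fun k hk => HahnSeries.coeff_eq_zero_of_lt_order (lt_of_le_of_lt hk h)

lemma order_eq_of_coeff {f : K} {m : ℤ} (h0 : f.coeff m ≠ 0)
    (h : ∀ k < m, f.coeff k = 0) : f.order = m := by
  have hf : f ≠ 0 := fun h' => h0 (by simp [h'])
  refine le_antisymm (HahnSeries.order_le_of_coeff_ne_zero h0) ?_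
  by_contra hlt
  push_neg at hlt
  exact (mt HahnSeries.coeff_order_eq_zero.mp hf) (h _ hlt)

lemma order_inv {f : K} (hf : f ≠ 0) : (f⁻¹).order = -f.order := by
  have h1 : (f * f⁻¹).order = 0 := by rw [mul_inv_cancel₀ hf, HahnSeries.order_one]
  rw [HahnSeries.order_mul hf (inv_ne_zero hf)] at h1
  omega

lemma CT_single (c : ZMod 3) :
    (HahnSeries.C c : K) * HahnSeries.single (-1) 1 = HahnSeries.single (-1) c := by
  rw [HahnSeries.C_apply, HahnSeries.single_mul_single, mul_one, zero_add]

lemma polypart {c₁ c₀ d₁ d₀ : ZMod 3} {r s : K}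
    (hr : small r) (hs : small s)
    (h : HahnSeries.C c₁ * HahnSeries.single (-1) 1 + HahnSeries.C c₀ + r
       = HahnSeries.C d₁ * HahnSeries.single (-1) 1 + HahnSeries.C d₀ + s) :
    c₁ = d₁ ∧ c₀ = d₀ ∧ r = s := by
  rw [CT_single, CT_single, HahnSeries.C_apply, HahnSeries.C_apply] at h
  have h1 := congrArg (fun f : K => f.coeff (-1)) h
  have h0 := congrArg (fun f : K => f.coeff 0) h
  simp only [HahnSeries.coeff_add, HahnSeries.coeff_single_same,
    HahnSeries.coeff_single_of_ne (show (-1 : ℤ) ≠ 0 by norm_num),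
    hr (-1) (by norm_num), hs (-1) (by norm_num), add_zero] at h1
  simp only [HahnSeries.coeff_add, HahnSeries.coeff_single_same,
    HahnSeries.coeff_single_of_ne (show (0 : ℤ) ≠ -1 by norm_num),
    hr 0 le_rfl, hs 0 le_rfl, add_zero, zero_add] at h0
  refine ⟨h1, h0, ?_⟩
  rw [h1, h0] at h
  exact add_left_cancel h

lemma three_eq_zero : (3 : K) = 0 := by
  rw [show (3 : K) = HahnSeries.C (3 : ZMod 3) from (map_ofNat _ 3).symm,
    show (3 : ZMod 3) = 0 by decide, map_zero]

lemma cube_add (u v : K) : (u + v) ^ 3 = u ^ 3 + v ^ 3 := by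
  linear_combination (u ^ 2 * v + u * v ^ 2) * three_eq_zero

end Lemma2Aux


/-- Lemma 2 of the paper: the inductive step propagating the hyperquadratic
    relation. If α_n³ = ε₁(T²+1)α_{f(n)} + ε_{2,n}T + ν_{n-1} with f(n) = 3n+l-2,
    all partial quotients a_k = λ_kT + μ_k of degree 1, all complete quotients of
    absolute value > 1, and δ_n = λ_n + ε_{2,n} ≠ 0, then
    a_{f(n)} = ε₁λ_nT, a_{f(n)+1} = -ε₁(δ_nT + ν_n), a_{f(n)+2} = -ε₁(ε*_nδ_nT + ν_n)
    and α_{n+1}³ = ε₁(T²+1)α_{f(n+1)} - ε*_nδ_nT + ν_n, where ν_n = μ_n - ν_{n-1}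
    and ε*_n = 1 if ν_n = 0, -1 otherwise. -/
theorem stmt17 (l : ℕ) (hl : 1 ≤ l)
    (α a : ℕ → LaurentSeries (ZMod 3)) (lam mu : ℕ → ZMod 3)
    (n : ℕ) (hn : 1 ≤ n) (e1 e2 nu' : ZMod 3) (he1 : e1 ≠ 0) (he2 : e2 ≠ 0) :
    let T : LaurentSeries (ZMod 3) := HahnSeries.single (-1) 1
    let cc : ZMod 3 → LaurentSeries (ZMod 3) := fun z => HahnSeries.C z
    let nun : ZMod 3 := mu n - nu'
    let dn : ZMod 3 := lam n + e2
    let es : ZMod 3 := if nun = 0 then 1 else -1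
    -- all partial quotients have degree 1
    (∀ j, 1 ≤ j → lam j ≠ 0 ∧ a j = cc (lam j) * T + cc (mu j)) →
    -- continued fraction algorithm: α_j = a_j + 1/α_{j+1}
    (∀ j, 1 ≤ j → α j = a j + (α (j + 1))⁻¹) →
    -- complete quotients have absolute value > 1
    (∀ j, 1 ≤ j → α j ≠ 0 ∧ (α j).order < 0) →
    -- hyperquadratic relation at rank n
    α n ^ 3 = cc e1 * (T ^ 2 + 1) * α (3 * n + l - 2) + cc e2 * T + cc nu' →
    dn ≠ 0 →
    a (3 * n + l - 2) = cc e1 * cc (lam n) * T ∧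
      a (3 * n + l - 2 + 1) = -(cc e1) * (cc dn * T + cc nun) ∧
      a (3 * n + l - 2 + 2) = -(cc e1) * (cc es * cc dn * T + cc nun) ∧
      α (n + 1) ^ 3 =
        cc e1 * (T ^ 2 + 1) * α (3 * (n + 1) + l - 2) + cc (-(es * dn)) * T + cc nun := by
  intro T cc nun dn es hdeg hstep hord hhyp hdn
  have hcc : ∀ z : ZMod 3, cc z = HahnSeries.C z := fun _ => rfl
  have hT : T = HahnSeries.single (-1) 1 := rfl
  simp only [hcc, hT] at hdeg hhyp ⊢
  -- ZMod 3 scalar facts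
  have hsq : ∀ z : ZMod 3, z ≠ 0 → z * z = 1 := by decide
  have he1sq := hsq e1 he1
  have hdnsq := hsq dn hdn
  have hesd : es = if nun = 0 then 1 else -1 := rfl
  have hfacts : es * es = 1 ∧ es = 1 + nun * nun ∧ nun * (1 + es) = 0 ∧ es ≠ 0 := by
    by_cases h : nun = 0
    · rw [hesd, if_pos h, h]
      exact ⟨by decide, by decide, by decide, by decide⟩
    · rw [hesd, if_neg h]
      have h2 := hsq nun h
      refine ⟨by decide, by rw [h2]; decide, ?_, by decide⟩
      rw [add_neg_cancel, mul_zero]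
  obtain ⟨hessq, hes1, hesnun, hesne⟩ := hfacts
  have hz3 : ∀ z : ZMod 3, z ^ 3 = z := by decide
  -- mapped facts in K
  have hmulC : ∀ b c : ZMod 3,
      (HahnSeries.C b : Lemma2Aux.K) * HahnSeries.C c = HahnSeries.C (b * c) :=
    fun b c => (map_mul _ b c).symm
  have hE1K : (HahnSeries.C e1 : Lemma2Aux.K) * HahnSeries.C e1 = 1 := by
    rw [hmulC, he1sq, map_one]
  have hDK : (HahnSeries.C dn : Lemma2Aux.K) * HahnSeries.C dn = 1 := by
    rw [hmulC, hdnsq, map_one]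
  have hESK : (HahnSeries.C es : Lemma2Aux.K) * HahnSeries.C es = 1 := by
    rw [hmulC, hessq, map_one]
  have hESNK : (HahnSeries.C es : Lemma2Aux.K) = 1 + HahnSeries.C nun * HahnSeries.C nun := by
    rw [hes1, map_add, map_mul, map_one]
  have hNESK : (HahnSeries.C nun : Lemma2Aux.K) * (1 + HahnSeries.C es) = 0 := by
    rw [show (1 : Lemma2Aux.K) + HahnSeries.C es = HahnSeries.C (1 + es) by
      rw [map_add, map_one], hmulC, hesnun, map_zero]
  have hdnK : (HahnSeries.C dn : Lemma2Aux.K) = HahnSeries.C (lam n) + HahnSeries.C e2 := by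
    rw [show dn = lam n + e2 from rfl, map_add]
  have hnunK : (HahnSeries.C nun : Lemma2Aux.K) = HahnSeries.C (mu n) - HahnSeries.C nu' := by
    rw [show nun = mu n - nu' from rfl, map_sub]
  have hCne : ∀ z : ZMod 3, z ≠ 0 → (HahnSeries.C z : Lemma2Aux.K) ≠ 0 :=
    fun z hz => HahnSeries.C_ne_zero hz
  have hCord : ∀ z : ZMod 3, z ≠ 0 → (HahnSeries.C z : Lemma2Aux.K).order = 0 := by
    intro z hz
    rw [HahnSeries.C_apply]
    exact HahnSeries.order_single hz
  -- index bookkeeping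
  rw [show 3 * (n + 1) + l - 2 = 3 * n + l - 2 + 3 by omega]
  set F := 3 * n + l - 2 with hFdef
  have hF1 : 1 ≤ F := by omega
  -- α (n+1)
  obtain ⟨hα1ne, hα1ord⟩ := hord (n + 1) (by omega)
  have hine : (α (n + 1))⁻¹ ≠ 0 := inv_ne_zero hα1ne
  have hio : 0 < ((α (n + 1))⁻¹).order := by
    rw [Lemma2Aux.order_inv hα1ne]; omega
  set x : Lemma2Aux.K := ((α (n + 1))⁻¹) ^ 3 with hxdef
  have hxne : x ≠ 0 := pow_ne_zero 3 hine
  have hxo3 : 3 ≤ x.order := by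
    rw [hxdef, show ((α (n + 1))⁻¹) ^ 3
        = (α (n + 1))⁻¹ * (α (n + 1))⁻¹ * (α (n + 1))⁻¹ by ring,
      HahnSeries.order_mul (mul_ne_zero hine hine) hine, HahnSeries.order_mul hine hine]
    omega
  have hxsmall : Lemma2Aux.small x := Lemma2Aux.small_of_order hxne (by omega)
  have hsmallinv : ∀ j, 1 ≤ j → Lemma2Aux.small ((α (j + 1))⁻¹) := by
    intro j hj
    obtain ⟨h1, h2⟩ := hord (j + 1) (by omega)
    exact Lemma2Aux.small_of_order (inv_ne_zero h1)
      (by rw [Lemma2Aux.order_inv h1]; omega)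
  -- the polynomial T^2+1
  set P : Lemma2Aux.K := HahnSeries.single (-1) 1 ^ 2 + 1 with hPdef
  have hPeq : P = HahnSeries.single (-2) (1 : ZMod 3) + HahnSeries.single 0 1 := by
    rw [hPdef, show (HahnSeries.single (-1) 1 : Lemma2Aux.K) ^ 2
        = HahnSeries.single (-2) 1 by
      rw [sq, HahnSeries.single_mul_single, mul_one]; norm_num,
      show (1 : Lemma2Aux.K) = HahnSeries.single (0 : ℤ) (1 : ZMod 3) by
        rw [← HahnSeries.C_apply, map_one]]
  have hPcoeff : P.coeff (-2) = 1 := by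
    rw [hPeq, HahnSeries.coeff_add, HahnSeries.coeff_single_same,
      HahnSeries.coeff_single_of_ne (show (-2 : ℤ) ≠ 0 by norm_num), add_zero]
  have hPne : P ≠ 0 := by
    intro h; rw [h, HahnSeries.coeff_zero] at hPcoeff; exact one_ne_zero hPcoeff.symm
  have hPord : P.order = -2 := by
    refine Lemma2Aux.order_eq_of_coeff (by rw [hPcoeff]; exact one_ne_zero) ?_
    intro k hk
    rw [hPeq, HahnSeries.coeff_add, HahnSeries.coeff_single_of_ne (by omega),
      HahnSeries.coeff_single_of_ne (by omega), add_zero]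
  set D1 : Lemma2Aux.K := HahnSeries.C e1 * P with hD1def
  have hD1ne : D1 ≠ 0 := mul_ne_zero (hCne e1 he1) hPne
  have hD1ord : D1.order = -2 := by
    rw [hD1def, HahnSeries.order_mul (hCne e1 he1) hPne, hCord e1 he1, hPord]
    norm_num
  -- y
  set y : Lemma2Aux.K := HahnSeries.C (-dn) * HahnSeries.single (-1) 1 + HahnSeries.C nun + x
    with hydef
  have hym1 : y.coeff (-1) = -dn := by
    rw [hydef, Lemma2Aux.CT_single, HahnSeries.coeff_add, HahnSeries.coeff_add,
      HahnSeries.coeff_single_same, HahnSeries.C_apply,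
      HahnSeries.coeff_single_of_ne (show (-1 : ℤ) ≠ 0 by norm_num),
      hxsmall (-1) (by norm_num), add_zero, add_zero]
  have hyk : ∀ k < (-1 : ℤ), y.coeff k = 0 := by
    intro k hk
    rw [hydef, Lemma2Aux.CT_single, HahnSeries.coeff_add, HahnSeries.coeff_add,
      HahnSeries.coeff_single_of_ne (by omega), HahnSeries.C_apply,
      HahnSeries.coeff_single_of_ne (by omega), hxsmall k (by omega), add_zero, add_zero]
  have hyne : y ≠ 0 := by
    intro h; rw [h, HahnSeries.coeff_zero] at hym1
    exact hdn (by rwa [eq_comm, neg_eq_zero] at hym1)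
  have hyord : y.order = -1 :=
    Lemma2Aux.order_eq_of_coeff (by rw [hym1]; exact neg_ne_zero.mpr hdn) hyk
  -- w
  set w : Lemma2Aux.K := HahnSeries.C dn * HahnSeries.single (-1) 1 + HahnSeries.C nun
    with hwdef
  have hwm1 : w.coeff (-1) = dn := by
    rw [hwdef, Lemma2Aux.CT_single, HahnSeries.coeff_add, HahnSeries.coeff_single_same,
      HahnSeries.C_apply, HahnSeries.coeff_single_of_ne (show (-1 : ℤ) ≠ 0 by norm_num),
      add_zero]
  have hwk : ∀ k < (-1 : ℤ), w.coeff k = 0 := by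
    intro k hk
    rw [hwdef, Lemma2Aux.CT_single, HahnSeries.coeff_add,
      HahnSeries.coeff_single_of_ne (by omega), HahnSeries.C_apply,
      HahnSeries.coeff_single_of_ne (by omega), add_zero]
  have hwne : w ≠ 0 := by
    intro h; rw [h, HahnSeries.coeff_zero] at hwm1; exact hdn hwm1.symm
  have hword : w.order = -1 := Lemma2Aux.order_eq_of_coeff (by rw [hwm1]; exact hdn) hwk
  -- N2
  set N2 : Lemma2Aux.K := HahnSeries.C e1 * (HahnSeries.C es + w * x) with hN2def
  have hwxne : w * x ≠ 0 := mul_ne_zero hwne hxne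
  have hwxord : 2 ≤ (w * x).order := by
    rw [HahnSeries.order_mul hwne hxne, hword]; omega
  have hce1wx_ne : HahnSeries.C e1 * (w * x) ≠ 0 := mul_ne_zero (hCne e1 he1) hwxne
  have hce1wx_small : Lemma2Aux.small (HahnSeries.C e1 * (w * x)) :=
    Lemma2Aux.small_of_order hce1wx_ne
      (by rw [HahnSeries.order_mul (hCne e1 he1) hwxne, hCord e1 he1]; omega)
  have hN2eq : N2 = HahnSeries.single 0 (e1 * es) + HahnSeries.C e1 * (w * x) := by
    rw [hN2def, mul_add, hmulC, HahnSeries.C_apply]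
  have he1es : e1 * es ≠ 0 := mul_ne_zero he1 hesne
  have hN2c0 : N2.coeff 0 = e1 * es := by
    rw [hN2eq, HahnSeries.coeff_add, HahnSeries.coeff_single_same,
      hce1wx_small 0 le_rfl, add_zero]
  have hN2k : ∀ k < (0 : ℤ), N2.coeff k = 0 := by
    intro k hk
    rw [hN2eq, HahnSeries.coeff_add, HahnSeries.coeff_single_of_ne (by omega),
      hce1wx_small k (by omega), add_zero]
  have hN2ne : N2 ≠ 0 := by
    intro h; rw [h, HahnSeries.coeff_zero] at hN2c0; exact he1es hN2c0.symm
  have hN2ord : N2.order = 0 :=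
    Lemma2Aux.order_eq_of_coeff (by rw [hN2c0]; exact he1es) hN2k
  -- cube equation
  have hα1step := hstep n hn
  have hdegn := hdeg n hn
  have hcubeEq : α n ^ 3
      = HahnSeries.C (lam n) * HahnSeries.single (-1) 1 ^ 3 + HahnSeries.C (mu n) + x := by
    rw [hα1step, Lemma2Aux.cube_add, hdegn.2, Lemma2Aux.cube_add, mul_pow,
      show (HahnSeries.C (lam n) : Lemma2Aux.K) ^ 3 = HahnSeries.C (lam n ^ 3) from
        (map_pow _ _ _).symm,
      show (HahnSeries.C (mu n) : Lemma2Aux.K) ^ 3 = HahnSeries.C (mu n ^ 3) from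
        (map_pow _ _ _).symm,
      hz3 (lam n), hz3 (mu n), ← hxdef]
  -- step B : α F
  have hr1ne : y * D1⁻¹ ≠ 0 := mul_ne_zero hyne (inv_ne_zero hD1ne)
  have hr1small : Lemma2Aux.small (y * D1⁻¹) :=
    Lemma2Aux.small_of_order hr1ne
      (by rw [HahnSeries.order_mul hyne (inv_ne_zero hD1ne), Lemma2Aux.order_inv hD1ne,
        hyord, hD1ord]; omega)
  have hαF : α F = HahnSeries.C e1 * HahnSeries.C (lam n) * HahnSeries.single (-1) 1
      + y * D1⁻¹ := by
    refine mul_left_cancel₀ hD1ne ?_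
    have hL : D1 * α F = HahnSeries.C (lam n) * HahnSeries.single (-1) 1 ^ 3
        + HahnSeries.C (mu n) + x - HahnSeries.C e2 * HahnSeries.single (-1) 1
        - HahnSeries.C nu' := by
      linear_combination hcubeEq - hhyp
    rw [mul_add, show D1 * (y * D1⁻¹) = y * (D1 * D1⁻¹) by ring, mul_inv_cancel₀ hD1ne,
      mul_one, hL, hydef, hD1def, hPdef, map_neg]
    linear_combination
      (-(HahnSeries.C (lam n) * HahnSeries.single (-1) (1 : ZMod 3) ^ 3)
        - HahnSeries.C (lam n) * HahnSeries.single (-1) 1) * hE1K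
      + HahnSeries.single (-1) (1 : ZMod 3) * hdnK - hnunK
  -- polypart 1
  have hstepF := hstep F hF1
  have hdegF := hdeg F hF1
  have key1 : HahnSeries.C (lam F) * HahnSeries.single (-1) 1 + HahnSeries.C (mu F)
      + (α (F + 1))⁻¹
      = HahnSeries.C (e1 * lam n) * HahnSeries.single (-1) 1 + HahnSeries.C 0
      + y * D1⁻¹ := by
    rw [map_zero, add_zero, ← hmulC, ← hdegF.2, ← hstepF]
    exact hαF
  obtain ⟨hlamF, hmuF, hinvF⟩ := Lemma2Aux.polypart (hsmallinv F hF1) hr1small key1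
  have goal1 : a F = HahnSeries.C e1 * HahnSeries.C (lam n) * HahnSeries.single (-1) 1 := by
    rw [hdegF.2, hlamF, hmuF, map_zero, add_zero, ← hmulC]
  -- step D : α (F+1)
  have hαF1 : α (F + 1) = D1 * y⁻¹ := by
    rw [← inv_inv (α (F + 1)), hinvF, mul_inv_rev, inv_inv]
  have keyD : D1 = (-(HahnSeries.C e1 * HahnSeries.C dn) * HahnSeries.single (-1) 1
      + -(HahnSeries.C e1 * HahnSeries.C nun)) * y + N2 := by
    rw [hD1def, hPdef, hydef, hN2def, hwdef, map_neg]
    linear_combination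
      (-(HahnSeries.C e1 * HahnSeries.single (-1) (1 : ZMod 3) ^ 2)) * hDK
      + (-(HahnSeries.C e1 : Lemma2Aux.K)) * hESNK
  have hr2ne : N2 * y⁻¹ ≠ 0 := mul_ne_zero hN2ne (inv_ne_zero hyne)
  have hr2small : Lemma2Aux.small (N2 * y⁻¹) :=
    Lemma2Aux.small_of_order hr2ne
      (by rw [HahnSeries.order_mul hN2ne (inv_ne_zero hyne), Lemma2Aux.order_inv hyne,
        hN2ord, hyord]; omega)
  have hαF1' : α (F + 1) = -(HahnSeries.C e1 * HahnSeries.C dn) * HahnSeries.single (-1) 1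
      + -(HahnSeries.C e1 * HahnSeries.C nun) + N2 * y⁻¹ := by
    rw [hαF1, keyD, add_mul, mul_assoc, mul_inv_cancel₀ hyne, mul_one]
  have key2 : HahnSeries.C (lam (F + 1)) * HahnSeries.single (-1) 1
      + HahnSeries.C (mu (F + 1)) + (α (F + 1 + 1))⁻¹
      = HahnSeries.C (-(e1 * dn)) * HahnSeries.single (-1) 1
      + HahnSeries.C (-(e1 * nun)) + N2 * y⁻¹ := by
    rw [map_neg, map_neg, ← hmulC, ← hmulC, ← (hdeg (F + 1) (by omega)).2,
      ← hstep (F + 1) (by omega)]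
    exact hαF1'
  obtain ⟨hlamF1, hmuF1, hinvF1⟩ :=
    Lemma2Aux.polypart (hsmallinv (F + 1) (by omega)) hr2small key2
  have goal2 : a (F + 1)
      = -(HahnSeries.C e1) * (HahnSeries.C dn * HahnSeries.single (-1) 1
        + HahnSeries.C nun) := by
    rw [(hdeg (F + 1) (by omega)).2, hlamF1, hmuF1, map_neg, map_neg, ← hmulC, ← hmulC]
    ring
  -- step E : α (F+2)
  rw [show F + 1 + 1 = F + 2 from rfl] at hinvF1
  have hαF2 : α (F + 2) = y * N2⁻¹ := by
    rw [← inv_inv (α (F + 2)), hinvF1, mul_inv_rev, inv_inv]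
  have keyE : y = (-(HahnSeries.C e1 * (HahnSeries.C es * HahnSeries.C dn))
        * HahnSeries.single (-1) 1
      + -(HahnSeries.C e1 * HahnSeries.C nun)) * N2 + HahnSeries.C es * x * P := by
    rw [hydef, hN2def, hwdef, hPdef, map_neg]
    linear_combination
      (HahnSeries.C es * HahnSeries.C es * HahnSeries.C dn * HahnSeries.single (-1) (1 : ZMod 3)
        + HahnSeries.C es * HahnSeries.C dn * HahnSeries.C dn
          * HahnSeries.single (-1) (1 : ZMod 3) ^ 2 * x
        + HahnSeries.C es * HahnSeries.C dn * HahnSeries.C nun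
          * HahnSeries.single (-1) (1 : ZMod 3) * x
        + HahnSeries.C es * HahnSeries.C nun
        + HahnSeries.C dn * HahnSeries.C nun * HahnSeries.single (-1) (1 : ZMod 3) * x
        + HahnSeries.C nun * HahnSeries.C nun * x) * hE1K
      + (HahnSeries.C dn * HahnSeries.single (-1) (1 : ZMod 3)) * hESK
      + (HahnSeries.C es * HahnSeries.single (-1) (1 : ZMod 3) ^ 2 * x) * hDK
      + (-x) * hESNK
      + (1 + HahnSeries.C dn * HahnSeries.single (-1) (1 : ZMod 3) * x) * hNESK
  have hCesne := hCne es hesne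
  have hMne : HahnSeries.C es * x * P ≠ 0 := mul_ne_zero (mul_ne_zero hCesne hxne) hPne
  have hr3ne : HahnSeries.C es * x * P * N2⁻¹ ≠ 0 := mul_ne_zero hMne (inv_ne_zero hN2ne)
  have hr3small : Lemma2Aux.small (HahnSeries.C es * x * P * N2⁻¹) :=
    Lemma2Aux.small_of_order hr3ne
      (by rw [HahnSeries.order_mul hMne (inv_ne_zero hN2ne),
        HahnSeries.order_mul (mul_ne_zero hCesne hxne) hPne,
        HahnSeries.order_mul hCesne hxne, Lemma2Aux.order_inv hN2ne,
        hCord es hesne, hPord, hN2ord]; omega)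
  have hαF2' : α (F + 2) = -(HahnSeries.C e1 * (HahnSeries.C es * HahnSeries.C dn))
        * HahnSeries.single (-1) 1
      + -(HahnSeries.C e1 * HahnSeries.C nun) + HahnSeries.C es * x * P * N2⁻¹ := by
    rw [hαF2, keyE, add_mul, mul_assoc, mul_inv_cancel₀ hN2ne, mul_one]
  have key3 : HahnSeries.C (lam (F + 2)) * HahnSeries.single (-1) 1
      + HahnSeries.C (mu (F + 2)) + (α (F + 2 + 1))⁻¹
      = HahnSeries.C (-(e1 * (es * dn))) * HahnSeries.single (-1) 1
      + HahnSeries.C (-(e1 * nun)) + HahnSeries.C es * x * P * N2⁻¹ := by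
    rw [map_neg, map_neg, ← hmulC, ← hmulC, ← hmulC, ← (hdeg (F + 2) (by omega)).2,
      ← hstep (F + 2) (by omega)]
    exact hαF2'
  obtain ⟨hlamF2, hmuF2, hinvF2⟩ :=
    Lemma2Aux.polypart (hsmallinv (F + 2) (by omega)) hr3small key3
  have goal3 : a (F + 2)
      = -(HahnSeries.C e1) * (HahnSeries.C es * HahnSeries.C dn * HahnSeries.single (-1) 1
        + HahnSeries.C nun) := by
    rw [(hdeg (F + 2) (by omega)).2, hlamF2, hmuF2, map_neg, map_neg, ← hmulC, ← hmulC,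
      ← hmulC]
    ring
  -- final relation
  rw [show F + 2 + 1 = F + 3 from rfl] at hinvF2
  have hαF3 : α (F + 3) = N2 * (HahnSeries.C es * x * P)⁻¹ := by
    rw [← inv_inv (α (F + 3)), hinvF2, mul_inv_rev, inv_inv]
  have hx3 : x⁻¹ = α (n + 1) ^ 3 := by
    rw [hxdef, inv_pow, inv_inv]
  have goal4 : α (n + 1) ^ 3 = D1 * α (F + 3)
      + HahnSeries.C (-(es * dn)) * HahnSeries.single (-1) 1 + HahnSeries.C nun := by
    rw [← hx3, hαF3, hD1def, map_neg, ← hmulC]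
    refine mul_right_cancel₀ hMne ?_
    rw [show x⁻¹ * (HahnSeries.C es * x * P)
        = HahnSeries.C es * P * (x⁻¹ * x) by ring, inv_mul_cancel₀ hxne, mul_one]
    rw [show (HahnSeries.C e1 * P * (N2 * (HahnSeries.C es * x * P)⁻¹)
          + -(HahnSeries.C es * HahnSeries.C dn) * HahnSeries.single (-1) 1
          + HahnSeries.C nun) * (HahnSeries.C es * x * P)
        = HahnSeries.C e1 * P * N2
            * ((HahnSeries.C es * x * P)⁻¹ * (HahnSeries.C es * x * P))
          + (-(HahnSeries.C es * HahnSeries.C dn) * HahnSeries.single (-1) 1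
            + HahnSeries.C nun) * (HahnSeries.C es * x * P) by ring,
      inv_mul_cancel₀ hMne, mul_one, hN2def, hwdef, hPdef]
    linear_combination
      (-((HahnSeries.single (-1) (1 : ZMod 3) ^ 2 + 1) * HahnSeries.C es)
        - (HahnSeries.single (-1) (1 : ZMod 3) ^ 2 + 1) * x * HahnSeries.C dn
          * HahnSeries.single (-1) (1 : ZMod 3)
        - (HahnSeries.single (-1) (1 : ZMod 3) ^ 2 + 1) * x * HahnSeries.C nun) * hE1K
      + ((HahnSeries.single (-1) (1 : ZMod 3) ^ 2 + 1) * x * HahnSeries.C dn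
          * HahnSeries.single (-1) (1 : ZMod 3)) * hESK
      + (-((HahnSeries.single (-1) (1 : ZMod 3) ^ 2 + 1) * x)) * hNESK
  exact ⟨goal1, goal2, goal3, goal4⟩
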